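/- Let $n \ge 1$ and consider the circle group $\mathbb{T} = \mathbb{R}/2\pi\mathbb{Z}$. Suppose $\Phi_1, \ldots, \Phi_n \in L^1(\mathbb{T})$ satisfy $\widehat{\Phi_j}(j) = 1$ for each $j$ (where $\widehat{\Phi}(k) = \frac{1}{2\pi}\int_0^{2\pi} \Phi(x) e^{-ikx}\,dx$), and suppose that for every $\varepsilon \in \{-1,1\}^n$, $\|\sum_j \varepsilon_j \Phi_j\|_{L^1} \le M$. Then $M \ge \sqrt{n/2}$. -/

import Mathlib

namespace Stmt8Aux

open Finset

variable {n : ℕ}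

def sgn (b : Bool) : ℝ := if b then 1 else -1

@[simp] lemma sgn_mul_self (b : Bool) : sgn b * sgn b = 1 := by cases b <;> simp [sgn]

@[simp] lemma sgn_not (b : Bool) : sgn (!b) = - sgn b := by cases b <;> simp [sgn]

def walsh (S : Finset (Fin n)) (x : Fin n → Bool) : ℝ := ∏ i ∈ S, sgn (x i)

lemma sum_prod_bool (g : Fin n → Bool → ℝ) :
    ∑ x : Fin n → Bool, ∏ i, g i (x i) = ∏ i, (g i true + g i false) := by
  rw [← Fintype.prod_sum (f := g)]
  congr 1
  funext i
  rw [Fintype.sum_bool]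

lemma walsh_orth (S T : Finset (Fin n)) :
    ∑ x : Fin n → Bool, walsh S x * walsh T x = if S = T then (2 ^ n : ℝ) else 0 := by
  have h : ∀ x : Fin n → Bool, walsh S x * walsh T x =
      ∏ i, ((if i ∈ S then sgn (x i) else 1) * (if i ∈ T then sgn (x i) else 1)) := by
    intro x
    rw [Finset.prod_mul_distrib]
    congr 1
    · rw [Finset.prod_ite_mem, Finset.univ_inter]; rfl
    · rw [Finset.prod_ite_mem, Finset.univ_inter]; rfl
  simp_rw [h]
  rw [sum_prod_bool (fun i b => (if i ∈ S then sgn b else 1) * (if i ∈ T then sgn b else 1))]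
  by_cases hST : S = T
  · subst hST
    rw [if_pos rfl]
    have h2 : ∀ i : Fin n, ((if i ∈ S then sgn true else 1) * (if i ∈ S then sgn true else 1)
        + (if i ∈ S then sgn false else 1) * (if i ∈ S then sgn false else 1)) = 2 := by
      intro i; by_cases hi : i ∈ S <;> simp [hi, sgn] <;> norm_num
    rw [Finset.prod_congr rfl (fun i _ => h2 i), Finset.prod_const]
    simp [card_univ]
  · rw [if_neg hST]
    -- get an element in symmetric difference
    have : ∃ i, (i ∈ S ∧ i ∉ T) ∨ (i ∈ T ∧ i ∉ S) := by
      by_contra hc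
      push_neg at hc
      apply hST
      ext i
      have := hc i
      tauto
    obtain ⟨i, hi⟩ := this
    apply Finset.prod_eq_zero (Finset.mem_univ i)
    rcases hi with ⟨h1, h2⟩ | ⟨h1, h2⟩ <;> simp [h1, h2, sgn]

lemma walsh_delta (x y : Fin n → Bool) :
    ∑ S : Finset (Fin n), walsh S x * walsh S y = if x = y then (2 ^ n : ℝ) else 0 := by
  have h : ∀ S : Finset (Fin n), walsh S x * walsh S y = ∏ i ∈ S, (sgn (x i) * sgn (y i)) := by
    intro S; rw [walsh, walsh, ← Finset.prod_mul_distrib]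
  simp_rw [h]
  have h2 : ∑ S : Finset (Fin n), ∏ i ∈ S, (sgn (x i) * sgn (y i))
      = ∏ i, (sgn (x i) * sgn (y i) + 1) := by
    rw [Finset.prod_add]
    rw [Finset.powerset_univ]
    apply Finset.sum_congr rfl
    intro S _
    simp
  rw [h2]
  by_cases hxy : x = y
  · subst hxy
    rw [if_pos rfl]
    rw [Finset.prod_congr rfl (fun i _ => by rw [sgn_mul_self]; norm_num : ∀ i ∈ Finset.univ, sgn (x i) * sgn (x i) + 1 = 2),
      Finset.prod_const]
    simp [card_univ]
  · rw [if_neg hxy]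
    have : ∃ i, x i ≠ y i := by
      by_contra hc; push_neg at hc; exact hxy (funext hc)
    obtain ⟨i, hi⟩ := this
    apply Finset.prod_eq_zero (Finset.mem_univ i)
    rcases Bool.eq_false_or_eq_true (x i) with h1 | h1 <;>
      rcases Bool.eq_false_or_eq_true (y i) with h2 | h2 <;>
      simp [h1, h2, sgn] at hi ⊢ <;> norm_num

/-- unnormalized Walsh coefficient -/
def coef (f : (Fin n → Bool) → ℝ) (S : Finset (Fin n)) : ℝ := ∑ x, f x * walsh S x

lemma inversion (f : (Fin n → Bool) → ℝ) (x : Fin n → Bool) :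
    ∑ S : Finset (Fin n), coef f S * walsh S x = 2 ^ n * f x := by
  simp_rw [coef, Finset.sum_mul]
  rw [Finset.sum_comm]
  have h : ∀ y, ∑ S : Finset (Fin n), f y * walsh S y * walsh S x
      = f y * (if y = x then (2 ^ n : ℝ) else 0) := by
    intro y
    rw [← walsh_delta y x, Finset.mul_sum]
    simp [mul_assoc]
  simp_rw [h]
  simp [mul_comm]

lemma parseval (f : (Fin n → Bool) → ℝ) :
    ∑ S : Finset (Fin n), coef f S ^ 2 = 2 ^ n * ∑ x, f x ^ 2 := by
  have h : ∀ S : Finset (Fin n), coef f S ^ 2 = ∑ x, f x * (coef f S * walsh S x) := by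
    intro S
    rw [sq, coef, Finset.mul_sum]
    apply Finset.sum_congr rfl
    intro x _
    ring
  simp_rw [h]
  rw [Finset.sum_comm]
  have h2 : ∀ x, ∑ S : Finset (Fin n), f x * (coef f S * walsh S x) = f x * (2 ^ n * f x) := by
    intro x
    rw [← inversion f x, Finset.mul_sum]
  simp_rw [h2]
  rw [Finset.mul_sum]
  apply Finset.sum_congr rfl
  intro x _
  ring

def flp (i : Fin n) (x : Fin n → Bool) : Fin n → Bool := Function.update x i (!(x i))

lemma flp_flp (i : Fin n) : Function.Involutive (flp i) := by
  intro x
  funext j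
  by_cases hj : j = i
  · subst hj; simp [flp, Function.update]
  · simp [flp, Function.update, hj]

lemma flp_apply (i j : Fin n) (x : Fin n → Bool) :
    flp i x j = if j = i then !(x i) else x j := by
  by_cases hj : j = i
  · subst hj; simp [flp]
  · simp [flp, Function.update, hj]

lemma walsh_flp (S : Finset (Fin n)) (i : Fin n) (x : Fin n → Bool) :
    walsh S (flp i x) = (if i ∈ S then -1 else 1) * walsh S x := by
  by_cases hi : i ∈ S
  · rw [if_pos hi]
    rw [walsh, walsh, ← Finset.mul_prod_erase S _ hi, ← Finset.mul_prod_erase S (fun j => sgn (x j)) hi]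
    rw [flp_apply, if_pos rfl, sgn_not]
    rw [Finset.prod_congr rfl (fun j hj => by
      rw [flp_apply, if_neg (Finset.ne_of_mem_erase hj)] : ∀ j ∈ S.erase i, sgn (flp i x j) = sgn (x j))]
    ring
  · rw [if_neg hi, one_mul, walsh, walsh]
    apply Finset.prod_congr rfl
    intro j hj
    rw [flp_apply, if_neg]
    rintro rfl
    exact hi hj

lemma coef_flp (f : (Fin n → Bool) → ℝ) (i : Fin n) (S : Finset (Fin n)) :
    ∑ x, f (flp i x) * walsh S x = (if i ∈ S then -1 else 1) * coef f S := by
  rw [show ∑ x, f (flp i x) * walsh S x = ∑ x, f x * walsh S (flp i x) from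
    Fintype.sum_equiv ((flp_flp i).toPerm) _ _ (fun x => by
      simp only [Function.Involutive.coe_toPerm]
      rw [(flp_flp i) x])]
  simp_rw [walsh_flp, coef, Finset.mul_sum]
  apply Finset.sum_congr rfl
  intro x _
  ring

def negx (x : Fin n → Bool) : Fin n → Bool := fun i => !(x i)

lemma negx_invol : Function.Involutive (negx (n := n)) := by
  intro x; funext i; simp [negx]

lemma walsh_negx (S : Finset (Fin n)) (x : Fin n → Bool) :
    walsh S (negx x) = (-1) ^ S.card * walsh S x := by
  rw [walsh, walsh]
  rw [Finset.prod_congr rfl (fun j _ => by rw [negx, sgn_not]; ring : ∀ j ∈ S, sgn (negx x j) = -1 * sgn (x j))]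
  rw [Finset.prod_mul_distrib, Finset.prod_const]

lemma coef_singleton (f : (Fin n → Bool) → ℝ) (hsymm : ∀ x, f (negx x) = f x) (i : Fin n) :
    coef f {i} = 0 := by
  have h : coef f {i} = - coef f {i} := by
    conv_lhs => rw [coef, show ∑ x, f x * walsh {i} x = ∑ x, f (negx x) * walsh {i} (negx x) from
      Fintype.sum_equiv (negx_invol.toPerm) _ _ (fun x => by
        simp only [Function.Involutive.coe_toPerm]
        rw [negx_invol x])]
    simp_rw [walsh_negx, hsymm, Finset.card_singleton, pow_one]
    rw [coef, ← Finset.sum_neg_distrib]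
    apply Finset.sum_congr rfl
    intro x _
    ring
  linarith

lemma LO (f : (Fin n → Bool) → ℝ) (hpos : ∀ x, 0 ≤ f x)
    (hsymm : ∀ x, f (negx x) = f x)
    (hconv : ∀ x, (n : ℝ) * f x ≤ 2 * f x + ∑ i, f (flp i x)) :
    (2 ^ n : ℝ) * ∑ x, f x ^ 2 ≤ 2 * (∑ x, f x) ^ 2 := by
  set c := coef f with hc
  -- the nonnegative quantity Q
  set g : (Fin n → Bool) → ℝ := fun x => 2 * f x + (∑ i, f (flp i x)) - n * f x with hg
  have hgpos : ∀ x, 0 ≤ g x := fun x => by have := hconv x; simp [hg]; linarith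
  have hQ : 0 ≤ ∑ x, g x * f x :=
    Finset.sum_nonneg (fun x _ => mul_nonneg (hgpos x) (hpos x))
  -- compute ∑_x g x * walsh S x
  have hgS : ∀ S : Finset (Fin n),
      ∑ x, g x * walsh S x = (2 - 2 * (S.card : ℝ)) * c S := by
    intro S
    have expand : ∀ x, g x * walsh S x = 2 * (f x * walsh S x)
        + (∑ i, f (flp i x) * walsh S x) - n * (f x * walsh S x) := by
      intro x
      simp only [hg]
      rw [sub_mul, add_mul, Finset.sum_mul]
      ring
    simp_rw [expand]
    rw [Finset.sum_sub_distrib, Finset.sum_add_distrib, ← Finset.mul_sum, ← Finset.mul_sum]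
    rw [Finset.sum_comm]
    have : ∀ i : Fin n, ∑ x, f (flp i x) * walsh S x = (if i ∈ S then -1 else 1) * c S :=
      fun i => coef_flp f i S
    simp_rw [this]
    rw [← Finset.sum_mul]
    have hsum : ∑ i : Fin n, (if i ∈ S then (-1 : ℝ) else 1) = (n : ℝ) - 2 * S.card := by
      have h1 : ∀ i : Fin n, (if i ∈ S then (-1 : ℝ) else 1)
          = 1 - 2 * (if i ∈ S then (1 : ℝ) else 0) := by
        intro i; split <;> norm_num
      simp_rw [h1]
      rw [Finset.sum_sub_distrib, ← Finset.mul_sum, Finset.sum_ite_mem, Finset.univ_inter,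
        Finset.sum_const, Finset.sum_const]
      simp [Finset.card_univ, mul_comm]
    rw [hsum]
    have hcS : ∑ x, f x * walsh S x = c S := rfl
    rw [hcS]
    ring
  -- key inequality in Walsh space
  have key : 0 ≤ ∑ S : Finset (Fin n), (2 - 2 * (S.card : ℝ)) * c S ^ 2 := by
    have calc1 : ∑ S : Finset (Fin n), (2 - 2 * (S.card : ℝ)) * c S ^ 2
        = 2 ^ n * ∑ x, g x * f x := by
      have h1 : ∀ S : Finset (Fin n), (2 - 2 * (S.card : ℝ)) * c S ^ 2
          = (∑ x, g x * walsh S x) * c S := by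
        intro S; rw [hgS S]; ring
      simp_rw [h1, Finset.sum_mul, mul_assoc]
      rw [Finset.sum_comm]
      have h2 : ∀ x, ∑ S : Finset (Fin n), g x * (walsh S x * c S) = g x * (2 ^ n * f x) := by
        intro x
        rw [← Finset.mul_sum]
        congr 1
        rw [← inversion f x]
        apply Finset.sum_congr rfl
        intro S _
        ring
      simp_rw [h2]
      rw [Finset.mul_sum]
      apply Finset.sum_congr rfl
      intro x _
      ring
    rw [calc1]
    positivity
  -- handle the (card-2) sum
  have hsing : ∀ i : Fin n, c {i} = 0 := coef_singleton f hsymm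
  have hu : -(2 * c ∅ ^ 2) ≤ ∑ S : Finset (Fin n), ((S.card : ℝ) - 2) * c S ^ 2 := by
    have hmem : (∅ : Finset (Fin n)) ∈ Finset.univ := Finset.mem_univ _
    rw [← Finset.add_sum_erase _ _ hmem]
    have h0 : ((Finset.card (∅ : Finset (Fin n)) : ℝ) - 2) * c ∅ ^ 2 = -(2 * c ∅ ^ 2) := by
      norm_num
    rw [h0]
    have hrest : 0 ≤ ∑ S ∈ Finset.univ.erase (∅ : Finset (Fin n)), ((S.card : ℝ) - 2) * c S ^ 2 := by
      apply Finset.sum_nonneg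
      intro S hS
      have hSne : S ≠ ∅ := Finset.ne_of_mem_erase hS
      rcases Nat.lt_or_ge S.card 2 with hlt | hge
      · interval_cases h : S.card
        · exact absurd (Finset.card_eq_zero.mp h) hSne
        · obtain ⟨i, rfl⟩ := Finset.card_eq_one.mp h
          rw [hsing i]
          simp
      · apply mul_nonneg _ (sq_nonneg _)
        have : (2 : ℝ) ≤ (S.card : ℝ) := by exact_mod_cast hge
        linarith
    linarith
  -- combine
  have hsum2 : ∑ S : Finset (Fin n), c S ^ 2 ≤ 2 * c ∅ ^ 2 := by
    have hcomb : ∑ S : Finset (Fin n), (2 - 2 * (S.card : ℝ)) * c S ^ 2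
        + 2 * ∑ S : Finset (Fin n), ((S.card : ℝ) - 2) * c S ^ 2
        = -2 * ∑ S : Finset (Fin n), c S ^ 2 := by
      rw [Finset.mul_sum, Finset.mul_sum, ← Finset.sum_add_distrib]
      apply Finset.sum_congr rfl
      intro S _
      ring
    nlinarith [key, hu]
  have hc0 : c ∅ = ∑ x, f x := by
    rw [hc, coef]
    apply Finset.sum_congr rfl
    intro x _
    simp [walsh]
  rw [← parseval f]
  rw [hc0] at hsum2
  exact hsum2

lemma sum_sq_rademacher (a : Fin n → ℝ) :
    ∑ x : Fin n → Bool, (∑ j, sgn (x j) * a j) ^ 2 = 2 ^ n * ∑ j, a j ^ 2 := by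
  have expand : ∀ x : Fin n → Bool, (∑ j, sgn (x j) * a j) ^ 2
      = ∑ j, ∑ k, (walsh {j} x * walsh {k} x) * (a j * a k) := by
    intro x
    rw [sq, Finset.sum_mul_sum]
    apply Finset.sum_congr rfl; intro j _
    apply Finset.sum_congr rfl; intro k _
    simp [walsh]
    ring
  simp_rw [expand]
  rw [Finset.sum_comm]
  have h1 : ∀ j : Fin n, ∑ x : Fin n → Bool, ∑ k, (walsh {j} x * walsh {k} x) * (a j * a k)
      = 2 ^ n * a j ^ 2 := by
    intro j
    rw [Finset.sum_comm]
    have h2 : ∀ k : Fin n, ∑ x : Fin n → Bool, (walsh {j} x * walsh {k} x) * (a j * a k)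
        = (if j = k then (2 ^ n : ℝ) else 0) * (a j * a k) := by
      intro k
      rw [← Finset.sum_mul, walsh_orth]
      congr 1
      simp [Finset.singleton_inj]
    simp_rw [h2, ite_mul, zero_mul]
    rw [Finset.sum_ite_eq]
    simp [sq]
  simp_rw [h1]
  rw [← Finset.mul_sum]

lemma khinchin (z : Fin n → ℂ) :
    (2 ^ n : ℝ) * Real.sqrt ((∑ j, ‖z j‖ ^ 2) / 2)
      ≤ ∑ x : Fin n → Bool, ‖∑ j, (sgn (x j) : ℂ) * z j‖ := by
  set F : (Fin n → Bool) → ℝ := fun x => ‖∑ j, (sgn (x j) : ℂ) * z j‖ with hF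
  have hpos : ∀ x, 0 ≤ F x := fun x => norm_nonneg _
  have hsymm : ∀ x, F (negx x) = F x := by
    intro x
    simp only [hF]
    have : ∑ j, (sgn (negx x j) : ℂ) * z j = -∑ j, (sgn (x j) : ℂ) * z j := by
      rw [← Finset.sum_neg_distrib]
      apply Finset.sum_congr rfl
      intro j _
      rw [negx, sgn_not]
      push_cast
      ring
    rw [this, norm_neg]
  have hconv : ∀ x, (n : ℝ) * F x ≤ 2 * F x + ∑ i, F (flp i x) := by
    intro x
    have hsum : ∑ i : Fin n, (∑ j, (sgn (flp i x j) : ℂ) * z j)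
        = ((n : ℂ) - 2) * ∑ j, (sgn (x j) : ℂ) * z j := by
      rw [Finset.sum_comm]
      rw [Finset.mul_sum]
      apply Finset.sum_congr rfl
      intro j _
      have : ∀ i : Fin n, (sgn (flp i x j) : ℂ) * z j
          = (sgn (x j) : ℂ) * z j - (if i = j then 2 * (sgn (x j) : ℂ) * z j else 0) := by
        intro i
        rw [flp_apply]
        by_cases hij : i = j
        · subst hij; rw [if_pos rfl, if_pos rfl, sgn_not]; push_cast; ring
        · rw [if_neg (fun h => hij h.symm), if_neg hij, sub_zero]
      simp_rw [this]
      rw [Finset.sum_sub_distrib, Finset.sum_const, Finset.sum_ite_eq']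
      simp [Finset.card_univ]
      ring
    have tri : ‖∑ i : Fin n, (∑ j, (sgn (flp i x j) : ℂ) * z j)‖ ≤ ∑ i, F (flp i x) :=
      norm_sum_le _ _
    rw [hsum] at tri
    rw [norm_mul] at tri
    have hn : ((n : ℝ) - 2) ≤ ‖(n : ℂ) - 2‖ := by
      have : ((n : ℂ) - 2) = (((n : ℝ) - 2 : ℝ) : ℂ) := by push_cast; ring
      rw [this, Complex.norm_real]
      exact le_abs_self _
    nlinarith [norm_nonneg (∑ j, (sgn (x j) : ℂ) * z j), hpos x]
  have hL2 : ∑ x, F x ^ 2 = 2 ^ n * ∑ j, ‖z j‖ ^ 2 := by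
    have hnorm : ∀ w : ℂ, ‖w‖ ^ 2 = w.re ^ 2 + w.im ^ 2 := by
      intro w
      rw [Complex.sq_norm, Complex.normSq_apply]
      ring
    have hre : ∀ x, F x ^ 2 = (∑ j, sgn (x j) * (z j).re) ^ 2 + (∑ j, sgn (x j) * (z j).im) ^ 2 := by
      intro x
      simp only [hF]
      rw [hnorm]
      have hvre : (∑ j, (sgn (x j) : ℂ) * z j).re = ∑ j, sgn (x j) * (z j).re := by
        rw [Complex.re_sum]
        apply Finset.sum_congr rfl
        intro j _
        simp [Complex.mul_re]
      have hvim : (∑ j, (sgn (x j) : ℂ) * z j).im = ∑ j, sgn (x j) * (z j).im := by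
        rw [Complex.im_sum]
        apply Finset.sum_congr rfl
        intro j _
        simp [Complex.mul_im]
      rw [hvre, hvim]
    simp_rw [hre, hnorm]
    rw [Finset.sum_add_distrib, sum_sq_rademacher, sum_sq_rademacher,
      Finset.sum_add_distrib, mul_add]
  have lo := LO F hpos hsymm hconv
  rw [hL2] at lo
  have hFnn : 0 ≤ ∑ x, F x := Finset.sum_nonneg (fun x _ => hpos x)
  have h1 : (2 ^ n : ℝ) * Real.sqrt ((∑ j, ‖z j‖ ^ 2) / 2)
      = Real.sqrt ((2 ^ n : ℝ) ^ 2 * ((∑ j, ‖z j‖ ^ 2) / 2)) := by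
    rw [Real.sqrt_mul (sq_nonneg _), Real.sqrt_sq (by positivity)]
  rw [h1, show (∑ x, F x) = Real.sqrt ((∑ x, F x) ^ 2) from (Real.sqrt_sq hFnn).symm]
  apply Real.sqrt_le_sqrt
  nlinarith [lo]

lemma pointwise_bound (z : Fin n → ℂ) :
    ∑ j, ‖z j‖ ≤ Real.sqrt n * Real.sqrt 2 / 2 ^ n
      * ∑ x : Fin n → Bool, ‖∑ j, (sgn (x j) : ℂ) * z j‖ := by
  have hk := khinchin z
  have hcs : (∑ j, ‖z j‖) ^ 2 ≤ (n : ℝ) * ∑ j, ‖z j‖ ^ 2 := by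
    have := sq_sum_le_card_mul_sum_sq (s := Finset.univ) (f := fun j : Fin n => ‖z j‖)
    simpa [Finset.card_univ] using this
  have h1 : ∑ j, ‖z j‖ ≤ Real.sqrt ((n : ℝ) * ∑ j, ‖z j‖ ^ 2) := by
    rw [show (∑ j, ‖z j‖) = Real.sqrt ((∑ j, ‖z j‖) ^ 2) from
      (Real.sqrt_sq (by positivity)).symm]
    exact Real.sqrt_le_sqrt hcs
  have h2 : Real.sqrt ((n : ℝ) * ∑ j, ‖z j‖ ^ 2)
      = Real.sqrt n * Real.sqrt 2 * Real.sqrt ((∑ j, ‖z j‖ ^ 2) / 2) := by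
    rw [← Real.sqrt_mul (by positivity), ← Real.sqrt_mul (by positivity)]
    congr 1
    ring
  have h3 : Real.sqrt ((∑ j, ‖z j‖ ^ 2) / 2)
      ≤ (∑ x : Fin n → Bool, ‖∑ j, (sgn (x j) : ℂ) * z j‖) / 2 ^ n := by
    rw [le_div_iff₀ (by positivity)]
    calc Real.sqrt ((∑ j, ‖z j‖ ^ 2) / 2) * 2 ^ n
        = (2 ^ n : ℝ) * Real.sqrt ((∑ j, ‖z j‖ ^ 2) / 2) := by ring
      _ ≤ _ := hk
  calc ∑ j, ‖z j‖ ≤ Real.sqrt ((n : ℝ) * ∑ j, ‖z j‖ ^ 2) := h1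
    _ = Real.sqrt n * Real.sqrt 2 * Real.sqrt ((∑ j, ‖z j‖ ^ 2) / 2) := h2
    _ ≤ Real.sqrt n * Real.sqrt 2 * ((∑ x : Fin n → Bool, ‖∑ j, (sgn (x j) : ℂ) * z j‖) / 2 ^ n) := by
        apply mul_le_mul_of_nonneg_left h3 (by positivity)
    _ = Real.sqrt n * Real.sqrt 2 / 2 ^ n * ∑ x : Fin n → Bool, ‖∑ j, (sgn (x j) : ℂ) * z j‖ := by
        ring

end Stmt8Aux

open MeasureTheory Real

instance : Fact (0 < 2 * Real.pi) := ⟨by positivity⟩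

theorem stmt8 (n : ℕ) (hn : 1 ≤ n) (Φ : Fin n → AddCircle (2 * Real.pi) → ℂ)
    (hΦ : ∀ j, Integrable (Φ j) AddCircle.haarAddCircle)
    (hcoef : ∀ j : Fin n, fourierCoeff (Φ j) (j : ℤ) = 1)
    (M : ℝ)
    (hM : ∀ ε : Fin n → ℝ, (∀ j, ε j = 1 ∨ ε j = -1) →
      ∫ x, ‖∑ j, (ε j : ℂ) * Φ j x‖ ∂AddCircle.haarAddCircle ≤ M) :
    Real.sqrt (n / 2) ≤ M := by
  classical
  set μ := (AddCircle.haarAddCircle : Measure (AddCircle (2 * Real.pi))) with hμ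
  open Stmt8Aux in
  -- lower bound on each L¹ norm
  have hbd : ∀ j : Fin n, (1 : ℝ) ≤ ∫ x, ‖Φ j x‖ ∂μ := by
    intro j
    have h1 : ‖fourierCoeff (Φ j) (j : ℤ)‖
        ≤ ∫ x, ‖fourier (-(j : ℤ)) x • Φ j x‖ ∂μ := by
      rw [fourierCoeff]
      exact norm_integral_le_integral_norm _
    rw [hcoef j, norm_one] at h1
    have h2 : ∀ x : AddCircle (2 * Real.pi), ‖fourier (-(j : ℤ)) x • Φ j x‖ = ‖Φ j x‖ := by
      intro x
      rw [norm_smul]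
      simp [fourier_apply, Circle.norm_coe]
    simp_rw [h2] at h1
    exact h1
  -- signed sums
  set F : (Fin n → Bool) → AddCircle (2 * Real.pi) → ℂ :=
    fun σ x => ∑ j, (Stmt8Aux.sgn (σ j) : ℂ) * Φ j x with hFdef
  have hFint : ∀ σ, Integrable (F σ) μ := by
    intro σ
    exact integrable_finset_sum _ (fun j _ => (hΦ j).const_mul _)
  have hFM : ∀ σ : Fin n → Bool, ∫ x, ‖F σ x‖ ∂μ ≤ M := by
    intro σ
    apply hM (fun j => Stmt8Aux.sgn (σ j))
    intro j
    cases h : σ j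
    · right; simp [Stmt8Aux.sgn, h]
    · left; simp [Stmt8Aux.sgn, h]
  set C : ℝ := Real.sqrt n * Real.sqrt 2 / 2 ^ n with hC
  have hCnn : 0 ≤ C := by positivity
  -- integrability
  have hintL : Integrable (fun x => ∑ j, ‖Φ j x‖) μ :=
    integrable_finset_sum _ (fun j _ => (hΦ j).norm)
  have hintR : Integrable (fun x => C * ∑ σ : Fin n → Bool, ‖F σ x‖) μ :=
    (integrable_finset_sum _ (fun σ _ => (hFint σ).norm)).const_mul C
  have hmono : ∫ x, (∑ j, ‖Φ j x‖) ∂μ ≤ ∫ x, (C * ∑ σ : Fin n → Bool, ‖F σ x‖) ∂μ := by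
    apply integral_mono hintL hintR
    intro x
    exact Stmt8Aux.pointwise_bound (fun j => Φ j x)
  have hL : (n : ℝ) ≤ ∫ x, (∑ j, ‖Φ j x‖) ∂μ := by
    rw [integral_finset_sum _ (fun j _ => (hΦ j).norm)]
    calc (n : ℝ) = ∑ _j : Fin n, (1 : ℝ) := by simp
      _ ≤ ∑ j, ∫ x, ‖Φ j x‖ ∂μ := Finset.sum_le_sum (fun j _ => hbd j)
  have hR : ∫ x, (C * ∑ σ : Fin n → Bool, ‖F σ x‖) ∂μ ≤ C * (2 ^ n * M) := by
    rw [integral_const_mul, integral_finset_sum _ (fun σ _ => (hFint σ).norm)]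
    apply mul_le_mul_of_nonneg_left _ hCnn
    calc ∑ σ : Fin n → Bool, ∫ x, ‖F σ x‖ ∂μ ≤ ∑ _σ : Fin n → Bool, M :=
          Finset.sum_le_sum (fun σ _ => hFM σ)
      _ = 2 ^ n * M := by
          rw [Finset.sum_const, Finset.card_univ, nsmul_eq_mul]
          congr 1
          simp [Fintype.card_fun]
  have hfinal : (n : ℝ) ≤ Real.sqrt n * Real.sqrt 2 * M := by
    have : C * (2 ^ n * M) = Real.sqrt n * Real.sqrt 2 * M := by
      rw [hC]; field_simp
    linarith [hL.trans (hmono.trans hR), this.symm.le, this.le]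
  -- conclude
  have hnpos : (0 : ℝ) < n := by exact_mod_cast hn
  have key : Real.sqrt ((n : ℝ) / 2) * (Real.sqrt n * Real.sqrt 2) = n := by
    rw [← Real.sqrt_mul (by positivity), ← Real.sqrt_mul (by positivity)]
    rw [show (n : ℝ) / 2 * ((n:ℝ) * 2) = (n : ℝ) ^ 2 by ring]
    exact Real.sqrt_sq (by positivity)
  have hpos2 : 0 < Real.sqrt n * Real.sqrt 2 := by
    apply mul_pos (Real.sqrt_pos.mpr hnpos) (Real.sqrt_pos.mpr (by norm_num))
  have : Real.sqrt ((n : ℝ) / 2) * (Real.sqrt n * Real.sqrt 2)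
      ≤ M * (Real.sqrt n * Real.sqrt 2) := by
    rw [key]
    calc (n : ℝ) ≤ Real.sqrt n * Real.sqrt 2 * M := hfinal
      _ = M * (Real.sqrt n * Real.sqrt 2) := by ring
  exact le_of_mul_le_mul_right this hpos2
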